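/- Let V be an n-dimensional vector space over the finite field F_q with n ≥ 3 and q ≥ 3. Then no identifying code exists for Γ(V); that is, no subset of vertices of Γ(V) is an identifying code. -/

import Mathlib

/-- A set `L` is a locating-dominating set of `G` if for every two distinct
vertices `u, v ∉ L` we have `∅ ≠ N(u) ∩ L ≠ N(v) ∩ L ≠ ∅`. -/
def IsLocDom {α : Type*} (G : SimpleGraph α) (L : Set α) : Prop :=
  ∀ ⦃u v : α⦄, u ∉ L → v ∉ L → u ≠ v →
    G.neighborSet u ∩ L ≠ ∅ ∧
    G.neighborSet u ∩ L ≠ G.neighborSet v ∩ L ∧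
    G.neighborSet v ∩ L ≠ ∅

/-- A set `C` is an identifying code of `G` if `N[u] ∩ C ≠ N[v] ∩ C`
for all distinct vertices `u, v`. -/
def IsIdCode {α : Type*} (G : SimpleGraph α) (C : Set α) : Prop :=
  ∀ ⦃u v : α⦄, u ≠ v →
    insert u (G.neighborSet u) ∩ C ≠ insert v (G.neighborSet v) ∩ C

/-- The location-domination number: minimum cardinality of a locating-dominating set. -/
noncomputable def locDomNum {α : Type*} (G : SimpleGraph α) : ℕ :=
  sInf {k : ℕ | ∃ L : Set α, IsLocDom G L ∧ L.ncard = k}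

/-- The identifying number: minimum cardinality of an identifying code. -/
noncomputable def idNum {α : Type*} (G : SimpleGraph α) : ℕ :=
  sInf {k : ℕ | ∃ C : Set α, IsIdCode G C ∧ C.ncard = k}
/-- The non-zero component graph of a vector space `W` with respect to a fixed
basis `b`: vertices are the non-zero vectors, and two distinct vertices are
adjacent iff some basis vector has non-zero coefficient in both of their
representations. -/
def nzcGraph {F W : Type*} [Field F] [AddCommGroup W] [Module F W] {n : ℕ}
    (b : Module.Basis (Fin n) F W) : SimpleGraph {w : W // w ≠ 0} where
  Adj u v := u ≠ v ∧ ∃ i, b.repr u.1 i ≠ 0 ∧ b.repr v.1 i ≠ 0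
  symm := by
    refine ⟨?_⟩
    rintro u v ⟨h, i, hu, hv⟩
    exact ⟨h.symm, i, hv, hu⟩
  loopless := by
    refine ⟨?_⟩
    rintro u ⟨h, -⟩
    exact h rfl

/-- `Tset b i` is the class `Tᵢ` of non-zero vectors having exactly `i`
non-zero coefficients in their representation w.r.t. the basis `b`. -/
def Tset {F W : Type*} [Field F] [AddCommGroup W] [Module F W] {n : ℕ}
    (b : Module.Basis (Fin n) F W) (i : ℕ) : Set {w : W // w ≠ 0} :=
  {v | (b.repr v.1).support.card = i}

/-- For `n ≥ 3` and `q ≥ 3`, no subset of vertices of `Γ(V)` is an identifying code. -/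
theorem stmt_16 {F W : Type*} [Field F] [Fintype F] (hq : 3 ≤ Fintype.card F)
    [AddCommGroup W] [Module F W] {n : ℕ} (hn : 3 ≤ n) (b : Module.Basis (Fin n) F W) :
    ∀ C : Set {w : W // w ≠ 0}, ¬ IsIdCode (nzcGraph b) C := by
  classical
  intro C hC
  obtain ⟨c, hc0, hc1⟩ : ∃ c : F, c ≠ 0 ∧ c ≠ 1 := by
    by_contra h
    push_neg at h
    have hsub : (Finset.univ : Finset F) ⊆ {0, 1} := by
      intro x _
      rcases eq_or_ne x 0 with hx | hx
      · simp [hx]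
      · simp [h x hx]
    have hle := Finset.card_le_card hsub
    have h2 : ({0, 1} : Finset F).card ≤ 2 :=
      (Finset.card_insert_le _ _).trans (by simp)
    simp [Finset.card_univ] at hle
    omega
  set i0 : Fin n := ⟨0, by omega⟩ with hi0
  have hb0 : (b i0 : W) ≠ 0 := b.ne_zero i0
  set u : {w : W // w ≠ 0} := ⟨b i0, hb0⟩ with hu
  set v : {w : W // w ≠ 0} := ⟨c • b i0, smul_ne_zero hc0 hb0⟩ with hv
  have hru : ∀ i, b.repr u.1 i = if i = i0 then 1 else 0 := by
    intro i
    simp [hu, Finsupp.single_apply, eq_comm]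
  have hrv : ∀ i, b.repr v.1 i = if i = i0 then c else 0 := by
    intro i
    simp [hv, Finsupp.single_apply, eq_comm]
  have huv : u ≠ v := by
    intro h
    have := congrArg (fun w => b.repr w.1 i0) h
    simp [hru i0, hrv i0] at this
    exact hc1 this.symm
  have key : ∀ x : {w : W // w ≠ 0},
      (x ∈ insert u ((nzcGraph b).neighborSet u) ↔ b.repr x.1 i0 ≠ 0) ∧
      (x ∈ insert v ((nzcGraph b).neighborSet v) ↔ b.repr x.1 i0 ≠ 0) := by
    intro x
    constructor
    · constructor
      · rintro (rfl | hadj)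
        · simp [hru i0]
        · obtain ⟨-, i, hi1, hi2⟩ := hadj
          have hii : i = i0 := by
            by_contra h
            rw [hru i, if_neg h] at hi1
            exact hi1 rfl
          exact hii ▸ hi2
      · intro hx
        rcases eq_or_ne x u with rfl | hne
        · exact Set.mem_insert _ _
        · exact Set.mem_insert_of_mem _ ⟨hne.symm, i0, by simp [hru i0], hx⟩
    · constructor
      · rintro (rfl | hadj)
        · simpa [hrv i0] using hc0
        · obtain ⟨-, i, hi1, hi2⟩ := hadj
          have hii : i = i0 := by
            by_contra h
            rw [hrv i, if_neg h] at hi1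
            exact hi1 rfl
          exact hii ▸ hi2
      · intro hx
        rcases eq_or_ne x v with rfl | hne
        · exact Set.mem_insert _ _
        · exact Set.mem_insert_of_mem _ ⟨hne.symm, i0, by simp [hrv i0, hc0], hx⟩
  have heq : insert u ((nzcGraph b).neighborSet u) = insert v ((nzcGraph b).neighborSet v) := by
    ext x
    rw [(key x).1, (key x).2]
  exact hC huv (by rw [heq])
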